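/- Let q ∈ ERV_ρ(g) with q nondecreasing and unbounded, and suppose F is a distribution function with q(y) = U(e^y) for U the left-continuous inverse of 1/(1−F), so that the GW survival limit −y^{-1}log(1−F(x g(y)+q(y))) → h_ρ^{-1}(x) holds for x ∈ h_ρ((0,∞)). Let ρ̃(y) → ρ and g̃(y) ~ g(y), g̃ positive, and define q̃_y(z) := q(y)+g̃(y)h_{ρ̃(y)}(z/y) and ν_y(z) := log(1−F(q̃_y(z)))/log(1−F(q(z))) − 1. Then for every Λ > 1, sup_{λ∈[1/Λ,Λ]} |ν_y(yλ)| → 0 as y → ∞. -/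

import Mathlib

open Filter Real

noncomputable def h (ρ lam : ℝ) : ℝ := if ρ = 0 then Real.log lam else (lam ^ ρ - 1) / ρ

lemma h_one (r : ℝ) : h r 1 = 0 := by
  unfold h; split_ifs <;> simp

lemma h_strictMono {r a b : ℝ} (ha : 0 < a) (hab : a < b) : h r a < h r b := by
  unfold h
  rcases lt_trichotomy r 0 with hr | hr | hr
  · rw [if_neg hr.ne, if_neg hr.ne]
    have h1 : b ^ r < a ^ r := Real.rpow_lt_rpow_of_neg ha hab hr
    exact div_lt_div_of_neg_of_lt hr (by linarith)
  · rw [hr]; simp only [if_pos rfl]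
    exact Real.log_lt_log ha hab
  · rw [if_neg hr.ne', if_neg hr.ne']
    have h1 : a ^ r < b ^ r := Real.rpow_lt_rpow ha.le hab hr
    exact div_lt_div_of_pos_right (by linarith) hr

lemma h_mono {r a b : ℝ} (ha : 0 < a) (hab : a ≤ b) : h r a ≤ h r b := by
  rcases eq_or_lt_of_le hab with rfl | hlt
  · exact le_refl _
  · exact (h_strictMono ha hlt).le

lemma h_contAt {lam : ℝ} (hlam : 0 < lam) (ρ : ℝ) : ContinuousAt (fun r => h r lam) ρ := by
  by_cases hρ : ρ = 0
  · subst hρ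
    have hd : HasDerivAt (fun r : ℝ => Real.exp (r * Real.log lam)) (Real.log lam) 0 := by
      have h0 : HasDerivAt (fun r : ℝ => r * Real.log lam) (Real.log lam) 0 := by
        simpa using (hasDerivAt_id (0:ℝ)).mul_const (Real.log lam)
      simpa using h0.exp
    have hslope := hasDerivAt_iff_tendsto_slope.1 hd
    have heq : ∀ r : ℝ, r ≠ 0 → slope (fun r : ℝ => Real.exp (r * Real.log lam)) 0 r = h r lam := by
      intro r hr
      rw [slope_def_field]
      unfold h
      rw [if_neg hr]
      rw [Real.rpow_def_of_pos hlam]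
      field_simp
      simp only [mul_zero, zero_mul, Real.exp_zero]; ring
    have hval : h 0 lam = Real.log lam := by unfold h; rw [if_pos rfl]
    unfold ContinuousAt
    simp only [hval]
    rw [← nhdsNE_sup_pure, Filter.tendsto_sup]
    constructor
    · refine Tendsto.congr' ?_ hslope
      filter_upwards [self_mem_nhdsWithin] with r hr
      exact heq r hr
    · simp only [Filter.tendsto_pure_left]
      intro s hs
      show h 0 lam ∈ s
      rw [hval]
      exact mem_of_mem_nhds hs
  · have hev : ∀ᶠ r in nhds ρ, r ≠ 0 := IsOpen.eventually_mem isOpen_compl_singleton hρ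
    have hc : ContinuousAt (fun r => (Real.exp (r * Real.log lam) - 1) / r) ρ := by
      fun_prop (disch := assumption)
    refine hc.congr ?_
    filter_upwards [hev] with r hr
    unfold h
    rw [if_neg hr, Real.rpow_def_of_pos hlam, mul_comm]

noncomputable def LL (F : ℝ → ℝ) (x : ℝ) : ℝ := -(Real.log (1 - F x))


set_option maxHeartbeats 1000000 in
theorem stmt14 (F U g ρt gt : ℝ → ℝ) (ρ : ℝ)
    (hFmono : Monotone F) (hF0 : ∀ x, 0 ≤ F x) (hF1 : ∀ x, F x ≤ 1)
    (hU : ∀ t, U t = sInf {x : ℝ | t ≤ 1 / (1 - F x)})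
    (hmono : Monotone U)
    (hinf : Tendsto U atTop atTop)
    (hgpos : ∀ y, 0 < g y) (hgtpos : ∀ y, 0 < gt y)
    (hERV : ∀ l : ℝ, 0 < l →
      Tendsto (fun y => (U (Real.exp (y * l)) - U (Real.exp y)) / g y)
        atTop (nhds (h ρ l)))
    (hGWsurv : ∀ l : ℝ, 0 < l →
      Tendsto (fun y => -(Real.log (1 - F (h ρ l * g y + U (Real.exp y)))) / y)
        atTop (nhds l))
    (hρt : Tendsto ρt atTop (nhds ρ))
    (hgt : Tendsto (fun y => gt y / g y) atTop (nhds 1)) :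
    ∀ Λ : ℝ, 1 < Λ → ∀ ε : ℝ, 0 < ε → ∀ᶠ y in atTop,
      ∀ l ∈ Set.Icc Λ⁻¹ Λ,
        |Real.log (1 - F (U (Real.exp y) + gt y * h (ρt y) l)) /
            Real.log (1 - F (U (Real.exp (y * l)))) - 1| < ε := by
  intro Λ hΛ ε hε
  have hΛpos : (0:ℝ) < Λ := lt_trans one_pos hΛ
  have hΛi : (0:ℝ) < Λ⁻¹ := inv_pos.2 hΛpos
  -- F is everywhere < 1
  have hFlt1 : ∀ x, F x < 1 := by
    by_contra hcon
    push_neg at hcon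
    obtain ⟨x₀, hx₀⟩ := hcon
    have hx0 : F x₀ = 1 := le_antisymm (hF1 x₀) hx₀
    have hb : ∀ t : ℝ, 1 ≤ t → U t ≤ max x₀ 0 := by
      intro t ht
      rw [hU t]
      have hSsub : {x : ℝ | t ≤ 1 / (1 - F x)} ⊆ Set.Iic x₀ := by
        intro x hx
        by_contra hxx
        rw [Set.mem_Iic, not_le] at hxx
        have hFx : F x = 1 := le_antisymm (hF1 x) (hx0 ▸ hFmono hxx.le)
        have hz : (1:ℝ) / (1 - F x) = 0 := by rw [hFx]; simp
        rw [Set.mem_setOf_eq, hz] at hx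
        linarith
      rcases Set.eq_empty_or_nonempty {x : ℝ | t ≤ 1 / (1 - F x)} with hS | hS
      · rw [hS, Real.sInf_empty]; exact le_max_right _ _
      · by_cases hbd : BddBelow {x : ℝ | t ≤ 1 / (1 - F x)}
        · obtain ⟨x, hxS⟩ := hS
          exact le_trans (csInf_le hbd hxS) (le_trans (hSsub hxS) (le_max_left _ _))
        · rw [Real.sInf_of_not_bddBelow hbd]; exact le_max_right _ _
    have hev := hinf.eventually (eventually_gt_atTop (max x₀ 0))
    rw [eventually_atTop] at hev
    obtain ⟨t₀, ht₀⟩ := hev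
    have h1 := ht₀ (max t₀ 1) (le_max_left _ _)
    have h2 := hb (max t₀ 1) (le_max_right _ _)
    linarith
  have hFsub : ∀ x, 0 < 1 - F x := fun x => sub_pos.2 (hFlt1 x)
  have hLmono : ∀ x₁ x₂, x₁ ≤ x₂ → LL F x₁ ≤ LL F x₂ := by
    intro x₁ x₂ hx
    have h12 : 1 - F x₂ ≤ 1 - F x₁ := by have := hFmono hx; linarith
    have := Real.log_le_log (hFsub x₂) h12
    unfold LL
    linarith
  -- the GW survival limit, in LL form
  have hGW : ∀ l : ℝ, 0 < l →
      Tendsto (fun y => LL F (h ρ l * g y + U (Real.exp y)) / y) atTop (nhds l) := by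
    intro l hl
    simpa only [LL] using hGWsurv l hl
  have hbase : Tendsto (fun y => LL F (U (Real.exp y)) / y) atTop (nhds 1) := by
    have := hGW 1 one_pos
    simpa [h_one] using this
  -- pointwise denominator limit
  have hD : ∀ c : ℝ, 0 < c →
      Tendsto (fun y => LL F (U (Real.exp (y * c))) / y) atTop (nhds c) := by
    intro c hc
    have hcomp : Tendsto (fun y : ℝ => y * c) atTop atTop :=
      Tendsto.atTop_mul_const hc tendsto_id
    have h2 := hbase.comp hcomp
    have h3 := h2.const_mul c
    rw [mul_one] at h3
    refine h3.congr' ?_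
    filter_upwards [eventually_ne_atTop 0] with y hy
    show c * (LL F (U (Real.exp (y * c))) / (y * c)) = LL F (U (Real.exp (y * c))) / y
    field_simp
  -- pointwise numerator bounds
  have hNev : ∀ c : ℝ, 0 < c → ∀ δ : ℝ, 0 < δ → ∀ᶠ y in atTop,
      c - δ < LL F (U (Real.exp y) + gt y * h (ρt y) c) / y ∧
      LL F (U (Real.exp y) + gt y * h (ρt y) c) / y < c + δ := by
    intro c hc δ hδ
    have hminpos : 0 < min c δ := lt_min hc hδ
    have hmin1 := min_le_left c δ
    have hmin2 := min_le_right c δ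
    set lm := c - min c δ / 2 with hlmdef
    set lp := c + δ / 2 with hlpdef
    have hlmpos : 0 < lm := by rw [hlmdef]; linarith
    have hlmlt : lm < c := by rw [hlmdef]; linarith
    have hlpgt : c < lp := by rw [hlpdef]; linarith
    have hhm : h ρ lm < h ρ c := h_strictMono hlmpos hlmlt
    have hhp : h ρ c < h ρ lp := h_strictMono hc hlpgt
    have hcont : Tendsto (fun y => h (ρt y) c) atTop (nhds (h ρ c)) :=
      (h_contAt hc ρ).tendsto.comp hρt
    have hratio : Tendsto (fun y => gt y / g y * h (ρt y) c) atTop (nhds (h ρ c)) := by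
      have := hgt.mul hcont
      rwa [one_mul] at this
    have hev1a := hratio.eventually (eventually_gt_nhds hhm)
    have hev1b := hratio.eventually (eventually_lt_nhds hhp)
    have hev2 := (hGW lm hlmpos).eventually
      (eventually_gt_nhds (show c - δ < lm by rw [hlmdef]; linarith))
    have hev3 := (hGW lp (lt_trans hc hlpgt)).eventually
      (eventually_lt_nhds (show lp < c + δ by rw [hlpdef]; linarith))
    filter_upwards [hev1a, hev1b, hev2, hev3, eventually_gt_atTop 0] with y hlo hhi h2 h3 hy0
    have hgy := hgpos y
    have key : gt y * h (ρt y) c = g y * (gt y / g y * h (ρt y) c) := by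
      field_simp
    have hlo' : h ρ lm * g y ≤ gt y * h (ρt y) c := by rw [key]; nlinarith
    have hhi' : gt y * h (ρt y) c ≤ h ρ lp * g y := by rw [key]; nlinarith
    have m1 : LL F (h ρ lm * g y + U (Real.exp y)) ≤
        LL F (U (Real.exp y) + gt y * h (ρt y) c) := hLmono _ _ (by linarith)
    have m2 : LL F (U (Real.exp y) + gt y * h (ρt y) c) ≤
        LL F (h ρ lp * g y + U (Real.exp y)) := hLmono _ _ (by linarith)
    constructor
    · calc c - δ < LL F (h ρ lm * g y + U (Real.exp y)) / y := h2
        _ ≤ LL F (U (Real.exp y) + gt y * h (ρt y) c) / y := by gcongr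
    · calc LL F (U (Real.exp y) + gt y * h (ρt y) c) / y
          ≤ LL F (h ρ lp * g y + U (Real.exp y)) / y := by gcongr
        _ < c + δ := h3
  -- grid setup
  set δ := min (ε * Λ⁻¹ / 6) (Λ⁻¹ / 2) with hδdef
  clear_value δ
  have hδpos : 0 < δ := by rw [hδdef]; exact lt_min (by positivity) (by positivity)
  have hδ1 : 6 * δ ≤ ε * Λ⁻¹ := by
    have := min_le_left (ε * Λ⁻¹ / 6) (Λ⁻¹ / 2); rw [hδdef]; linarith
  have hδ2 : δ ≤ Λ⁻¹ / 2 := by rw [hδdef]; exact min_le_right _ _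
  set n := ⌈(Λ - Λ⁻¹) / δ⌉₊ + 1 with hndef
  clear_value n
  have hgridpos : ∀ j : ℕ, (0:ℝ) < Λ⁻¹ + j * δ := fun j => by positivity
  have hbig : ∀ᶠ y in atTop, 0 < y ∧ ∀ j ∈ Finset.range (n+1),
      ((Λ⁻¹ + (j:ℝ)*δ) - δ <
        LL F (U (Real.exp y) + gt y * h (ρt y) (Λ⁻¹ + (j:ℝ)*δ)) / y ∧
        LL F (U (Real.exp y) + gt y * h (ρt y) (Λ⁻¹ + (j:ℝ)*δ)) / y < (Λ⁻¹ + (j:ℝ)*δ) + δ) ∧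
      ((Λ⁻¹ + (j:ℝ)*δ) - δ < LL F (U (Real.exp (y * (Λ⁻¹ + (j:ℝ)*δ)))) / y ∧
        LL F (U (Real.exp (y * (Λ⁻¹ + (j:ℝ)*δ)))) / y < (Λ⁻¹ + (j:ℝ)*δ) + δ) := by
    refine (eventually_gt_atTop 0).and ?_
    rw [Filter.eventually_all_finset]
    intro j _
    have hc : (0:ℝ) < Λ⁻¹ + j * δ := hgridpos j
    have e1 := hNev _ hc δ hδpos
    have e2 := (hD _ hc).eventually
      (eventually_gt_nhds (show (Λ⁻¹ + (j:ℝ)*δ) - δ < Λ⁻¹ + (j:ℝ)*δ by linarith))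
    have e3 := (hD _ hc).eventually
      (eventually_lt_nhds (show Λ⁻¹ + (j:ℝ)*δ < (Λ⁻¹ + (j:ℝ)*δ) + δ by linarith))
    filter_upwards [e1, e2, e3] with y h1 h2 h3
    exact ⟨h1, h2, h3⟩
  -- conclusion
  filter_upwards [hbig] with y hy
  obtain ⟨hy0, hP⟩ := hy
  rintro l ⟨hl1, hl2⟩
  have hl0 : 0 < l := lt_of_lt_of_le hΛi hl1
  set j := ⌊(l - Λ⁻¹)/δ⌋₊ with hjdef
  clear_value j
  have hjle : (j:ℝ) ≤ (l - Λ⁻¹)/δ := by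
    rw [hjdef]; exact Nat.floor_le (div_nonneg (by linarith) hδpos.le)
  have hjlt : (l - Λ⁻¹)/δ < (j:ℝ) + 1 := by
    rw [hjdef]; exact Nat.lt_floor_add_one _
  have ha_le : Λ⁻¹ + (j:ℝ)*δ ≤ l := by
    have := (le_div_iff₀ hδpos).mp hjle
    linarith
  have hb_ge : l ≤ Λ⁻¹ + ((j:ℝ)+1)*δ := by
    have := (div_lt_iff₀ hδpos).mp hjlt
    linarith
  have hj1n : j + 1 ≤ n := by
    have hmono2 : (l - Λ⁻¹)/δ ≤ (Λ - Λ⁻¹)/δ := by gcongr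
    have hf := Nat.floor_mono hmono2
    have hfc := Nat.floor_le_ceil ((Λ - Λ⁻¹)/δ)
    rw [hjdef, hndef]
    omega
  have hjmem : j ∈ Finset.range (n+1) := Finset.mem_range.2 (by omega)
  have hj1mem : j+1 ∈ Finset.range (n+1) := Finset.mem_range.2 (by omega)
  obtain ⟨⟨hN1, hN2⟩, hD1, hD2⟩ := hP j hjmem
  obtain ⟨⟨hN1', hN2'⟩, hD1', hD2'⟩ := hP (j+1) hj1mem
  set a := Λ⁻¹ + (j:ℝ)*δ with hadef
  clear_value a
  have hcast : Λ⁻¹ + ((j+1:ℕ):ℝ)*δ = a + δ := by rw [hadef]; push_cast; ring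
  rw [hcast] at hN1' hN2' hD1' hD2'
  have hapos : 0 < a := by rw [hadef]; exact hgridpos j
  have haΛ : Λ⁻¹ ≤ a := by
    rw [hadef]
    nlinarith [mul_nonneg (Nat.cast_nonneg j : (0:ℝ) ≤ (j:ℝ)) hδpos.le]
  have hbl : l ≤ a + δ := by rw [hadef]; linarith
  -- monotonicity in l
  have hgty := (hgtpos y).le
  have hmN1 : LL F (U (Real.exp y) + gt y * h (ρt y) a) ≤
      LL F (U (Real.exp y) + gt y * h (ρt y) l) :=
    hLmono _ _ (by
      have := h_mono (r := ρt y) hapos ha_le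
      nlinarith)
  have hmN2 : LL F (U (Real.exp y) + gt y * h (ρt y) l) ≤
      LL F (U (Real.exp y) + gt y * h (ρt y) (a + δ)) :=
    hLmono _ _ (by
      have := h_mono (r := ρt y) hl0 hbl
      nlinarith)
  have hmD1 : LL F (U (Real.exp (y * a))) ≤ LL F (U (Real.exp (y * l))) :=
    hLmono _ _ (hmono (Real.exp_le_exp.2 (by nlinarith)))
  have hmD2 : LL F (U (Real.exp (y * l))) ≤ LL F (U (Real.exp (y * (a + δ)))) :=
    hLmono _ _ (hmono (Real.exp_le_exp.2 (by nlinarith)))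
  set N := LL F (U (Real.exp y) + gt y * h (ρt y) l) with hNdef
  set D := LL F (U (Real.exp (y * l))) with hDdef
  set A := N / y with hAdef
  set B := D / y with hBdef
  clear_value N D A B
  have hAl : a - δ < A := by
    rw [hAdef]
    calc a - δ < LL F (U (Real.exp y) + gt y * h (ρt y) a) / y := hN1
      _ ≤ N / y := by gcongr
  have hAu : A < a + 2*δ := by
    rw [hAdef]
    calc N / y ≤ LL F (U (Real.exp y) + gt y * h (ρt y) (a + δ)) / y := by gcongr
      _ < (a + δ) + δ := hN2'
      _ = a + 2*δ := by ring
  have hBl : a - δ < B := by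
    rw [hBdef]
    calc a - δ < LL F (U (Real.exp (y * a))) / y := hD1
      _ ≤ D / y := by gcongr
  have hBu : B < a + 2*δ := by
    rw [hBdef]
    calc D / y ≤ LL F (U (Real.exp (y * (a + δ)))) / y := by gcongr
      _ < (a + δ) + δ := hD2'
      _ = a + 2*δ := by ring
  have hB0 : 0 < B := by
    have : Λ⁻¹/2 ≤ a - δ := by linarith
    linarith
  have hD0 : D ≠ 0 := by
    intro hD0'
    rw [hBdef, hD0', zero_div] at hB0
    exact lt_irrefl _ hB0
  -- rewrite goal as |A/B - 1| < ε
  have hgoal_eq : Real.log (1 - F (U (Real.exp y) + gt y * h (ρt y) l)) /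
      Real.log (1 - F (U (Real.exp (y * l)))) = A / B := by
    have e1 : Real.log (1 - F (U (Real.exp y) + gt y * h (ρt y) l)) = -N := by
      rw [hNdef]; unfold LL; ring
    have e2 : Real.log (1 - F (U (Real.exp (y * l)))) = -D := by
      rw [hDdef]; unfold LL; ring
    rw [e1, e2, neg_div_neg_eq, hAdef, hBdef]
    field_simp
  rw [hgoal_eq]
  -- final arithmetic
  have h3δ : 3*δ ≤ ε*(a - δ) := by
    have h1 : Λ⁻¹/2 ≤ a - δ := by linarith
    have h2 : ε*(Λ⁻¹/2) ≤ ε*(a - δ) := mul_le_mul_of_nonneg_left h1 hε.le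
    nlinarith
  have hup : A < (1+ε)*B := by
    have hx : (1+ε)*(a - δ) < (1+ε)*B := mul_lt_mul_of_pos_left hBl (by linarith)
    nlinarith
  have hlow : (1-ε)*B < A := by
    rcases le_or_gt (1-ε) 0 with hc1 | hc1
    · have hx : (1-ε)*B ≤ 0 := mul_nonpos_of_nonpos_of_nonneg hc1 hB0.le
      have : Λ⁻¹/2 ≤ a - δ := by linarith
      linarith
    · have hx : (1-ε)*B < (1-ε)*(a + 2*δ) := mul_lt_mul_of_pos_left hBu hc1
      have hy' : (1-ε)*(a + 2*δ) ≤ a - δ := by nlinarith [mul_nonneg hε.le hδpos.le]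
      linarith
  rw [abs_lt]
  constructor
  · have : 1 - ε < A/B := (lt_div_iff₀ hB0).2 (by linarith)
    linarith
  · have : A/B < 1 + ε := (div_lt_iff₀ hB0).2 (by linarith)
    linarith
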